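/- The mean squared quantization error of a Laplace(Λ) source under uniform scalar quantization with step Q, defined by D(Λ,Q) = ∫_{-Q/2}^{Q/2} x² (Λ/2)e^{-Λ|x|}dx + 2∑_{i=1}^∞ ∫_{iQ-Q/2}^{iQ+Q/2} (x-iQ)² (Λ/2)e^{-Λ|x|}dx, equals [2 - (1/4)e^{-ΛQ/2}(Λ²Q²+4ΛQ+8)]/Λ² + [(-ΛQ(ΛQ+4) + e^{ΛQ}(ΛQ(ΛQ-4)+8) - 8)/(4Λ²)]·e^{-3ΛQ/2}/(1-e^{-ΛQ}). -/

import Mathlib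

open Real intervalIntegral

noncomputable def Gq (Λ c x : ℝ) : ℝ :=
  -(((x - c) ^ 2 / Λ + (2 * (x - c) / Λ ^ 2 + 2 / Λ ^ 3)) * Real.exp (-Λ * x))

lemma Gq_deriv (Λ : ℝ) (hΛ : Λ ≠ 0) (c x : ℝ) :
    HasDerivAt (Gq Λ c) ((x - c) ^ 2 * Real.exp (-Λ * x)) x := by
  have h1 : HasDerivAt (fun x => (x - c) ^ 2 / Λ + (2 * (x - c) / Λ ^ 2 + 2 / Λ ^ 3))
      (2 * (x - c) / Λ + 2 / Λ ^ 2) x := by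
    have hb : HasDerivAt (fun x : ℝ => x - c) 1 x := (hasDerivAt_id x).sub_const c
    have h2 := ((hb.pow 2).div_const Λ).add (((hb.const_mul 2).div_const (Λ ^ 2)).add_const (2 / Λ ^ 3))
    refine h2.congr_deriv ?_
    push_cast
    ring
  have h2 : HasDerivAt (fun x => Real.exp (-Λ * x)) (-Λ * Real.exp (-Λ * x)) x := by
    have := (Real.hasDerivAt_exp (-Λ * x)).comp x ((hasDerivAt_id x).const_mul (-Λ))
    simpa [Function.comp_def, mul_comm] using this
  have h3 := (h1.mul h2).neg
  refine h3.congr_deriv ?_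
  field_simp
  ring

lemma integ (Λ : ℝ) (hΛ : Λ ≠ 0) (c a b : ℝ) :
    ∫ x in a..b, (x - c) ^ 2 * Real.exp (-Λ * x) = Gq Λ c b - Gq Λ c a := by
  apply intervalIntegral.integral_eq_sub_of_hasDerivAt (fun x _ => Gq_deriv Λ hΛ c x)
  exact (Continuous.intervalIntegrable (by continuity) a b)

lemma Gq_shift (Λ c u : ℝ) : Gq Λ c (c + u) = Gq Λ 0 u * Real.exp (-Λ * c) := by
  unfold Gq
  rw [show -Λ * (c + u) = -Λ * u + -Λ * c by ring, Real.exp_add]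
  ring

theorem laplace_quantizer_distortion_closed_form (Λ Q : ℝ) (hΛ : 0 < Λ) (hQ : 0 < Q) :
    (∫ x in (-(Q / 2))..(Q / 2), x ^ 2 * ((Λ / 2) * Real.exp (-Λ * |x|)))
      + 2 * ∑' i : ℕ,
          ∫ x in (((i : ℝ) + 1) * Q - Q / 2)..(((i : ℝ) + 1) * Q + Q / 2),
            (x - ((i : ℝ) + 1) * Q) ^ 2 * ((Λ / 2) * Real.exp (-Λ * |x|))
    = (2 - (1 / 4) * Real.exp (-Λ * Q / 2) * (Λ ^ 2 * Q ^ 2 + 4 * (Λ * Q) + 8)) / Λ ^ 2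
      + ((-(Λ * Q) * (Λ * Q + 4) + Real.exp (Λ * Q) * ((Λ * Q) * (Λ * Q - 4) + 8) - 8)
            / (4 * Λ ^ 2))
          * (Real.exp (-(3 / 2) * (Λ * Q)) / (1 - Real.exp (-Λ * Q))) := by
  have hΛ' : Λ ≠ 0 := ne_of_gt hΛ
  set r : ℝ := Real.exp (-Λ * Q) with hr
  have hr0 : 0 < r := Real.exp_pos _
  have hr1 : r < 1 := by
    rw [hr, Real.exp_lt_one_iff]
    nlinarith
  -- tail terms
  have hterm : ∀ i : ℕ,
      (∫ x in (((i : ℝ) + 1) * Q - Q / 2)..(((i : ℝ) + 1) * Q + Q / 2),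
        (x - ((i : ℝ) + 1) * Q) ^ 2 * ((Λ / 2) * Real.exp (-Λ * |x|)))
      = ((Λ / 2) * (Gq Λ 0 (Q / 2) - Gq Λ 0 (-(Q / 2))) * r) * r ^ i := by
    intro i
    set c : ℝ := ((i : ℝ) + 1) * Q with hc
    have hcQ : Q ≤ c := by
      rw [hc]
      nlinarith [Nat.cast_nonneg (α := ℝ) i]
    have hab : c - Q / 2 ≤ c + Q / 2 := by linarith
    have hcongr : Set.EqOn
        (fun x => (x - c) ^ 2 * ((Λ / 2) * Real.exp (-Λ * |x|)))
        (fun x => (Λ / 2) * ((x - c) ^ 2 * Real.exp (-Λ * x)))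
        (Set.uIcc (c - Q / 2) (c + Q / 2)) := by
      intro x hx
      rw [Set.uIcc_of_le hab] at hx
      have hx0 : 0 ≤ x := by
        have := hx.1; linarith
      simp only [abs_of_nonneg hx0]
      ring
    rw [intervalIntegral.integral_congr hcongr,
      intervalIntegral.integral_const_mul, integ Λ hΛ' c]
    have e1 : c + Q / 2 = c + (Q / 2) := rfl
    have e2 : c - Q / 2 = c + (-(Q / 2)) := by ring
    rw [e1, e2, Gq_shift, Gq_shift]
    have e3 : Real.exp (-Λ * c) = r ^ (i + 1) := by
      rw [hc, show -Λ * (((i : ℝ) + 1) * Q) = ((i + 1 : ℕ) : ℝ) * (-Λ * Q) by push_cast; ring,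
        Real.exp_nat_mul]
    rw [e3, pow_succ]
    ring
  rw [tsum_congr hterm, tsum_mul_left, tsum_geometric_of_lt_one hr0.le hr1]
  -- central integral
  have hint1 : IntervalIntegrable (fun x => x ^ 2 * ((Λ / 2) * Real.exp (-Λ * |x|)))
      MeasureTheory.volume (-(Q / 2)) 0 :=
    Continuous.intervalIntegrable (by fun_prop) _ _
  have hint2 : IntervalIntegrable (fun x => x ^ 2 * ((Λ / 2) * Real.exp (-Λ * |x|)))
      MeasureTheory.volume 0 (Q / 2) :=
    Continuous.intervalIntegrable (by fun_prop) _ _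
  rw [← intervalIntegral.integral_add_adjacent_intervals hint1 hint2]
  have hpos : (∫ x in (0 : ℝ)..(Q / 2), x ^ 2 * ((Λ / 2) * Real.exp (-Λ * |x|)))
      = (Λ / 2) * (Gq Λ 0 (Q / 2) - Gq Λ 0 0) := by
    have hcongr : Set.EqOn
        (fun x => x ^ 2 * ((Λ / 2) * Real.exp (-Λ * |x|)))
        (fun x => (Λ / 2) * ((x - 0) ^ 2 * Real.exp (-Λ * x)))
        (Set.uIcc (0 : ℝ) (Q / 2)) := by
      intro x hx
      rw [Set.uIcc_of_le (by linarith)] at hx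
      have hx0 : 0 ≤ x := hx.1
      simp only [abs_of_nonneg hx0]
      ring_nf
    rw [intervalIntegral.integral_congr hcongr, intervalIntegral.integral_const_mul,
      integ Λ hΛ' 0]
  have hneg : (∫ x in (-(Q / 2))..(0 : ℝ), x ^ 2 * ((Λ / 2) * Real.exp (-Λ * |x|)))
      = (Λ / 2) * (Gq Λ 0 (Q / 2) - Gq Λ 0 0) := by
    have hsym := intervalIntegral.integral_comp_neg (a := (0 : ℝ)) (b := Q / 2)
      (fun x => x ^ 2 * ((Λ / 2) * Real.exp (-Λ * |x|)))
    simp only [abs_neg, neg_neg, neg_zero, neg_mul] at hsym ⊢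
    rw [← hsym]
    simpa using hpos
  rw [hneg, hpos]
  -- algebra in t = exp(-(ΛQ)/2)
  unfold Gq
  set t : ℝ := Real.exp (-(Λ * Q) / 2) with ht
  have ht0 : 0 < t := Real.exp_pos _
  have ht1 : t < 1 := by
    rw [ht, Real.exp_lt_one_iff]; nlinarith
  have e1 : Real.exp (-Λ * (Q / 2)) = t := by
    rw [ht]; congr 1; ring
  have e2 : Real.exp (-Λ * (-(Q / 2))) = t⁻¹ := by
    rw [ht, ← Real.exp_neg]; congr 1; ring
  have e4 : r = t ^ 2 := by
    rw [hr, ht, ← Real.exp_nat_mul]; congr 1; push_cast; ring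
  have e5 : Real.exp (Λ * Q) = (t ^ 2)⁻¹ := by
    rw [ht, ← Real.exp_nat_mul, ← Real.exp_neg]; congr 1; push_cast; ring
  have e6 : Real.exp (-(3 / 2) * (Λ * Q)) = t ^ 3 := by
    rw [ht, ← Real.exp_nat_mul]; congr 1; push_cast; ring
  have e7 : Real.exp (-Λ * Q / 2) = t := by
    rw [ht]; congr 1; ring
  have e8 : Real.exp (-Λ * (0 : ℝ)) = 1 := by simp
  rw [e1, e2, e4, e5, e6, e7, e8]
  have h1t : 1 - t ^ 2 ≠ 0 := by nlinarith
  have h3Λ : Λ ^ 3 ≠ 0 := pow_ne_zero 3 hΛ'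
  have h2Λ : Λ ^ 2 ≠ 0 := pow_ne_zero 2 hΛ'
  field_simp
  ring
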